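/- Let A ∈ M_k ⊗ M_m be positive semidefinite Hermitian with Hermitian Schmidt decomposition Σ_{i=1}^n λ_i γ_i ⊗ δ_i. If for some index j both γ_j and δ_j are positive semidefinite, then the subspace (range(γ_j) ⊗ ker(δ_j)) ⊕ (ker(γ_j) ⊗ range(δ_j)) is contained in ker(A). -/

import Mathlib

open Matrix Kronecker ComplexOrder

/-- A PSD complex matrix with zero trace is zero. -/
lemma psd_trace_eq_zero_aux {N : Type*} [Fintype N] [DecidableEq N] {B : Matrix N N ℂ}
    (hB : B.PosSemidef) (h : B.trace = 0) : B = 0 := by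
  obtain ⟨Q, rfl⟩ : ∃ Q : Matrix N N ℂ, B = Qᴴ * Q := by
    open scoped MatrixOrder in
    exact CStarAlgebra.nonneg_iff_eq_star_mul_self.mp hB.nonneg
  suffices hQ : Q = 0 by rw [hQ]; simp
  have hd : ∀ l, (Qᴴ * Q) l l = star (fun r => Q r l) ⬝ᵥ (fun r => Q r l) := by
    intro l
    simp [Matrix.mul_apply, Matrix.conjTranspose_apply, dotProduct]
  have hnn : ∀ l ∈ (Finset.univ : Finset N), (0:ℂ) ≤ (Qᴴ * Q) l l := by
    intro l _
    rw [hd]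
    exact Finset.sum_nonneg fun r _ => star_mul_self_nonneg _
  rw [Matrix.trace] at h
  have h0 := (Finset.sum_eq_zero_iff_of_nonneg hnn).mp h
  ext i l
  have hcol : (fun r => Q r l) = 0 :=
    dotProduct_star_self_eq_zero.mp (by rw [← hd l]; exact h0 l (Finset.mem_univ l))
  exact congrFun hcol i

open scoped MatrixOrder in
/-- If `C, G` are PSD and `trace (C * G) = 0` then `G * C * G = 0`. -/
lemma psd_sandwich_zero {N : Type*} [Fintype N] [DecidableEq N] {C G : Matrix N N ℂ}
    (hC : C.PosSemidef) (hG : G.PosSemidef) (h : (C * G).trace = 0) : G * C * G = 0 := by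
  have hS : CFC.sqrt G * CFC.sqrt G = G := CFC.sqrt_mul_sqrt_self G hG.nonneg
  have hSH : (CFC.sqrt G)ᴴ = CFC.sqrt G := (CFC.sqrt_nonneg G).posSemidef.isHermitian
  have hP : (CFC.sqrt G * C * CFC.sqrt G).PosSemidef := by
    have := hC.conjTranspose_mul_mul_same (CFC.sqrt G)
    rwa [hSH] at this
  have ht : (CFC.sqrt G * C * CFC.sqrt G).trace = 0 := by
    rw [Matrix.mul_assoc, Matrix.trace_mul_comm, Matrix.mul_assoc, hS]
    exact h
  have h0 : CFC.sqrt G * C * CFC.sqrt G = 0 := psd_trace_eq_zero_aux hP ht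
  calc G * C * G = (CFC.sqrt G * CFC.sqrt G) * C * (CFC.sqrt G * CFC.sqrt G) := by rw [hS]
    _ = CFC.sqrt G * (CFC.sqrt G * C * CFC.sqrt G) * CFC.sqrt G := by simp only [Matrix.mul_assoc]
    _ = 0 := by rw [h0]; simp

lemma sum_mulVec_aux {N K K' : Type*} [Fintype K] (s : Finset N)
    (B : N → Matrix K' K ℂ) (v : K → ℂ) :
    (∑ i ∈ s, B i) *ᵥ v = ∑ i ∈ s, (B i *ᵥ v) := by
  funext p
  simp only [Matrix.mulVec, dotProduct, Finset.sum_apply, Matrix.sum_apply, Finset.sum_mul]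
  rw [Finset.sum_comm]

lemma dotProduct_sum_aux {N K : Type*} [Fintype K] (s : Finset N) (v : K → ℂ)
    (w : N → K → ℂ) : v ⬝ᵥ (∑ i ∈ s, w i) = ∑ i ∈ s, v ⬝ᵥ w i := by
  simp only [dotProduct, Finset.sum_apply, Finset.mul_sum]
  rw [Finset.sum_comm]

lemma prod_dot_aux {K M : Type*} [Fintype K] [Fintype M]
    (u1 c1 : K → ℂ) (u2 c2 : M → ℂ) :
    (fun p : K × M => u1 p.1 * u2 p.2) ⬝ᵥ (fun p => c1 p.1 * c2 p.2)
      = (u1 ⬝ᵥ c1) * (u2 ⬝ᵥ c2) := by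
  simp only [dotProduct, Fintype.sum_prod_type, Finset.sum_mul, Finset.mul_sum]
  rw [Finset.sum_comm]
  exact Finset.sum_congr rfl fun b _ => Finset.sum_congr rfl fun a _ => by ring

lemma kron_mulVec_aux {K M : Type*} [Fintype K] [Fintype M]
    (γ : Matrix K K ℂ) (δ : Matrix M M ℂ) (x : K → ℂ) (y : M → ℂ) :
    (γ ⊗ₖ δ) *ᵥ (fun p => x p.1 * y p.2) = fun p => (γ *ᵥ x) p.1 * (δ *ᵥ y) p.2 := by
  funext p
  simp only [Matrix.mulVec, dotProduct, Matrix.kroneckerMap_apply, Fintype.sum_prod_type,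
    Finset.sum_mul, Finset.mul_sum]
  rw [Finset.sum_comm]
  exact Finset.sum_congr rfl fun b _ => Finset.sum_congr rfl fun a _ => by ring

lemma herm_quad_real_aux {M : Type*} [Fintype M] {δ : Matrix M M ℂ} (hδ : δ.IsHermitian)
    (y : M → ℂ) : star (star y ⬝ᵥ δ *ᵥ y) = star y ⬝ᵥ δ *ᵥ y := by
  rw [← Matrix.star_dotProduct, Matrix.star_mulVec, hδ.eq]
  rw [Matrix.dotProduct_mulVec]

/-- Core lemma: a product vector `x ⊗ y` with `x` in the range of `γ j` and
`y` annihilating the quadratic form of `δ j` is in the kernel of `A`. -/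
lemma core_aux {K M N : Type*} [Fintype K] [Fintype M] [Fintype N]
    [DecidableEq K] [DecidableEq N]
    (A : Matrix (K × M) (K × M) ℂ) (hA : A.PosSemidef)
    (lam : N → ℝ) (γ : N → Matrix K K ℂ) (δ : N → Matrix M M ℂ)
    (hγH : ∀ i, (γ i).IsHermitian) (hδH : ∀ i, (δ i).IsHermitian)
    (hdec : A = ∑ i, (lam i : ℂ) • (γ i ⊗ₖ δ i))
    (j : N) (hγj : (γ j).PosSemidef)
    (hoγ : ∀ i, Matrix.trace (γ i * γ j) = if i = j then 1 else 0)
    (x : K → ℂ) (y : M → ℂ) (z : K → ℂ) (hz : γ j *ᵥ z = x)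
    (hy : star y ⬝ᵥ δ j *ᵥ y = 0) :
    A *ᵥ (fun p => x p.1 * y p.2) = 0 := by
  classical
  set C : Matrix K K ℂ := ∑ i, ((lam i : ℂ) * (star y ⬝ᵥ δ i *ᵥ y)) • γ i with hCdef
  -- quadratic form identity
  have hquad : ∀ w : K → ℂ,
      star (fun p : K × M => w p.1 * y p.2) ⬝ᵥ (A *ᵥ (fun p : K × M => w p.1 * y p.2))
        = star w ⬝ᵥ (C *ᵥ w) := by
    intro w
    have hstar : star (fun p : K × M => w p.1 * y p.2)
        = fun p : K × M => star w p.1 * star y p.2 := by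
      funext p
      exact star_mul' _ _
    rw [hdec, hCdef, sum_mulVec_aux, sum_mulVec_aux, dotProduct_sum_aux, dotProduct_sum_aux]
    refine Finset.sum_congr rfl fun i _ => ?_
    rw [smul_mulVec, kron_mulVec_aux, dotProduct_smul, hstar, prod_dot_aux,
      smul_mulVec, dotProduct_smul]
    simp only [smul_eq_mul]
    ring
  -- C is PSD
  have hCpsd : C.PosSemidef := by
    refine Matrix.PosSemidef.of_dotProduct_mulVec_nonneg ?_ ?_
    · rw [hCdef]
      show (∑ i, ((lam i : ℂ) * (star y ⬝ᵥ δ i *ᵥ y)) • γ i)ᴴ = _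
      rw [Matrix.conjTranspose_sum]
      refine Finset.sum_congr rfl fun i _ => ?_
      rw [Matrix.conjTranspose_smul, (hγH i).eq, star_mul', herm_quad_real_aux (hδH i),
        Complex.star_def, Complex.conj_ofReal, mul_comm]
    · intro w
      rw [← hquad w]
      exact hA.dotProduct_mulVec_nonneg _
  -- trace of C * γ j vanishes
  have htr : (C * γ j).trace = 0 := by
    rw [hCdef, Finset.sum_mul, Matrix.trace_sum]
    have hterm : ∀ i ∈ (Finset.univ : Finset N),
        ((((lam i : ℂ) * (star y ⬝ᵥ δ i *ᵥ y)) • γ i) * γ j).trace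
          = if i = j then (lam i : ℂ) * (star y ⬝ᵥ δ i *ᵥ y) else 0 := by
      intro i _
      rw [Matrix.smul_mul, Matrix.trace_smul, hoγ i]
      simp [mul_ite]
    rw [Finset.sum_congr rfl hterm, Finset.sum_ite_eq' Finset.univ j]
    simp [hy]
  -- sandwich
  have hkey : γ j * C * γ j = 0 := psd_sandwich_zero hCpsd hγj htr
  have hx0 : star x ⬝ᵥ C *ᵥ x = 0 := by
    rw [← hz, Matrix.star_mulVec, Matrix.mulVec_mulVec, Matrix.dotProduct_mulVec,
      Matrix.vecMul_vecMul, (hγj.isHermitian).eq, ← Matrix.mul_assoc, hkey]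
    simp
  have hfin : star (fun p : K × M => x p.1 * y p.2)
      ⬝ᵥ (A *ᵥ (fun p : K × M => x p.1 * y p.2)) = 0 := by
    rw [hquad x, hx0]
  exact (hA.dotProduct_mulVec_zero_iff _).mp hfin

/-- Lemma: if a term of a Hermitian Schmidt decomposition of a PSD matrix `A` has both
factors PSD, then `(range γⱼ ⊗ ker δⱼ) ⊕ (ker γⱼ ⊗ range δⱼ) ⊆ ker A`. -/
theorem stmt11 {k m n : ℕ} (A : Matrix (Fin k × Fin m) (Fin k × Fin m) ℂ)
    (hA : A.PosSemidef)
    (lam : Fin n → ℝ) (γ : Fin n → Matrix (Fin k) (Fin k) ℂ)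
    (δ : Fin n → Matrix (Fin m) (Fin m) ℂ)
    (hpos : ∀ i, 0 < lam i)
    (hγ : ∀ i, (γ i).IsHermitian) (hδ : ∀ i, (δ i).IsHermitian)
    (hoγ : ∀ i j, Matrix.trace (γ i * (γ j)ᴴ) = if i = j then 1 else 0)
    (hoδ : ∀ i j, Matrix.trace (δ i * (δ j)ᴴ) = if i = j then 1 else 0)
    (hdec : A = ∑ i, (lam i : ℂ) • (γ i ⊗ₖ δ i))
    (j : Fin n) (hγj : (γ j).PosSemidef) (hδj : (δ j).PosSemidef) :
    ∀ (x : Fin k → ℂ) (y : Fin m → ℂ) (x' : Fin k → ℂ) (y' : Fin m → ℂ),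
      (∃ z, γ j *ᵥ z = x) → δ j *ᵥ y = 0 →
      γ j *ᵥ x' = 0 → (∃ z, δ j *ᵥ z = y') →
      A *ᵥ (fun p => x p.1 * y p.2 + x' p.1 * y' p.2) = 0 := by
  rintro x y x' y' ⟨z1, hz1⟩ hy hx' ⟨z2, hz2⟩
  -- first summand
  have h1 : A *ᵥ (fun p : Fin k × Fin m => x p.1 * y p.2) = 0 := by
    refine core_aux A hA lam γ δ hγ hδ hdec j hγj (fun i => ?_) x y z1 hz1 ?_
    · rw [← (hγ j).eq]; exact hoγ i j
    · rw [hy]; simp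
  -- second summand, via swapping the two factors
  have h2 : A *ᵥ (fun p : Fin k × Fin m => x' p.1 * y' p.2) = 0 := by
    set e : (Fin m × Fin k) ≃ (Fin k × Fin m) := Equiv.prodComm _ _ with he
    have hA' : (A.submatrix e e).PosSemidef := hA.submatrix e
    have hdec' : A.submatrix e e = ∑ i, (lam i : ℂ) • (δ i ⊗ₖ γ i) := by
      ext p q
      rw [Matrix.submatrix_apply, hdec]
      simp only [Matrix.sum_apply, Matrix.smul_apply, Matrix.kroneckerMap_apply, smul_eq_mul]
      refine Finset.sum_congr rfl fun i _ => ?_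
      simp only [he, Equiv.prodComm_apply, Prod.fst_swap, Prod.snd_swap]
      ring
    have h2' : (A.submatrix e e) *ᵥ (fun q : Fin m × Fin k => y' q.1 * x' q.2) = 0 := by
      refine core_aux (A.submatrix e e) hA' lam δ γ hδ hγ hdec' j hδj (fun i => ?_)
        y' x' z2 hz2 ?_
      · rw [← (hδ j).eq]; exact hoδ i j
      · rw [hx']; simp
    rw [Matrix.submatrix_mulVec_equiv] at h2'
    have h2'' : A *ᵥ ((fun q : Fin m × Fin k => y' q.1 * x' q.2) ∘ e.symm) = 0 := by
      funext p
      have := congrFun h2' (e.symm p)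
      simpa [he] using this
    have : ((fun q : Fin m × Fin k => y' q.1 * x' q.2) ∘ e.symm)
        = fun p : Fin k × Fin m => x' p.1 * y' p.2 := by
      funext p
      simp [he, Equiv.prodComm, mul_comm]
    rwa [this] at h2''
  have hsplit : (fun p : Fin k × Fin m => x p.1 * y p.2 + x' p.1 * y' p.2)
      = (fun p : Fin k × Fin m => x p.1 * y p.2) + (fun p => x' p.1 * y' p.2) := rfl
  rw [hsplit, Matrix.mulVec_add, h1, h2, add_zero]
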